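/- Let ℐ₁, ℐ₊, ℐ₋ be pairwise disjoint index sets whose union is {1,…,N}, and let K ∈ ℕ. Suppose a matrix A⋄ ∈ ℝ^{m×N} admits constants δ̂_K(A⋄) ∈ (0,1) and θ̂_K(A⋄) > 0 such that (1 − δ̂_K(A⋄))·‖x‖₂² ≤ ‖A⋄ x‖₂² for all x ∈ Σ_K, and max( max_{j ∈ ℐ₁} |⟨A⋄ x, A⋄_{•j}⟩|, max_{j ∈ ℐ₊} (⟨A⋄ x, A⋄_{•j}⟩)₊, max_{j ∈ ℐ₋} (⟨A⋄ x, A⋄_{•j}⟩)₋ ) ≤ θ̂_K(A⋄)·‖x‖₂ for all x ∈ Σ_K, with 1 − δ̂_K(A⋄) > √K · θ̂_K(A⋄). Then there exists η > 0 such that every A ∈ ℝ^{m×N} with ‖A − A⋄‖₂ < η (spectral norm) admits constants δ̂_K(A) ∈ (0,1) and θ̂_K(A) > 0 satisfying the same two inequality conditions (with A in place of A⋄) and 1 − δ̂_K(A) > √K · θ̂_K(A). -/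

import Mathlib

open Matrix Set

set_option maxHeartbeats 1000000

/-- The spectral (operator 2-) norm of a real matrix. -/
noncomputable def specNorm {m N : ℕ} (A : Matrix (Fin m) (Fin N) ℝ) : ℝ :=
  sSup ((fun x : Fin N → ℝ => Real.sqrt (∑ i, (A.mulVec x) i ^ 2)) ''
    {x : Fin N → ℝ | ∑ i, x i ^ 2 ≤ 1})

namespace AuxP64

noncomputable def nrm {n : ℕ} (v : Fin n → ℝ) : ℝ := Real.sqrt (∑ i, v i ^ 2)

lemma nrm_nonneg {n : ℕ} (v : Fin n → ℝ) : 0 ≤ nrm v := Real.sqrt_nonneg _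

lemma nrm_sq {n : ℕ} (v : Fin n → ℝ) : nrm v ^ 2 = ∑ i, v i ^ 2 :=
  Real.sq_sqrt (Finset.sum_nonneg fun i _ => sq_nonneg _)

lemma cs {n : ℕ} (u v : Fin n → ℝ) : |u ⬝ᵥ v| ≤ nrm u * nrm v := by
  have h := Finset.sum_mul_sq_le_sq_mul_sq Finset.univ u v
  calc |u ⬝ᵥ v| = Real.sqrt ((u ⬝ᵥ v) ^ 2) := (Real.sqrt_sq_eq_abs _).symm
    _ ≤ Real.sqrt ((∑ i, u i ^ 2) * ∑ i, v i ^ 2) := Real.sqrt_le_sqrt h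
    _ = nrm u * nrm v := Real.sqrt_mul (Finset.sum_nonneg fun i _ => sq_nonneg _) _

lemma cs' {n : ℕ} (u v : Fin n → ℝ) : u ⬝ᵥ v ≤ nrm u * nrm v :=
  (le_abs_self _).trans (cs u v)

lemma nrm_smul {n : ℕ} (c : ℝ) (v : Fin n → ℝ) : nrm (c • v) = |c| * nrm v := by
  unfold nrm
  simp only [Pi.smul_apply, smul_eq_mul, mul_pow, ← Finset.mul_sum]
  rw [Real.sqrt_mul (sq_nonneg c), Real.sqrt_sq_eq_abs]

lemma nrm_add_le {n : ℕ} (u v : Fin n → ℝ) : nrm (u + v) ≤ nrm u + nrm v := by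
  have hexp : ∑ i, (u + v) i ^ 2 = (∑ i, u i ^ 2) + 2 * (u ⬝ᵥ v) + ∑ i, v i ^ 2 := by
    simp only [Pi.add_apply, add_sq, dotProduct, Finset.sum_add_distrib, Finset.mul_sum,
      mul_assoc]
  have h1 : ∑ i, (u + v) i ^ 2 ≤ (nrm u + nrm v) ^ 2 := by
    have hcs := cs' u v
    have h2 := nrm_sq u
    have h3 := nrm_sq v
    nlinarith [nrm_nonneg u, nrm_nonneg v]
  calc nrm (u + v) = Real.sqrt (∑ i, (u + v) i ^ 2) := rfl
    _ ≤ Real.sqrt ((nrm u + nrm v) ^ 2) := Real.sqrt_le_sqrt h1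
    _ = nrm u + nrm v := Real.sqrt_sq (add_nonneg (nrm_nonneg u) (nrm_nonneg v))

/-- Frobenius norm bound. -/
noncomputable def frob {m n : ℕ} (A : Matrix (Fin m) (Fin n) ℝ) : ℝ :=
  Real.sqrt (∑ i, ∑ j, A i j ^ 2)

lemma frob_nonneg {m n : ℕ} (A : Matrix (Fin m) (Fin n) ℝ) : 0 ≤ frob A :=
  Real.sqrt_nonneg _

lemma nrm_mulVec_le_frob {m n : ℕ} (A : Matrix (Fin m) (Fin n) ℝ) (x : Fin n → ℝ) :
    nrm (A.mulVec x) ≤ frob A * nrm x := by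
  have key : ∑ i, (A.mulVec x) i ^ 2 ≤ (∑ i, ∑ j, A i j ^ 2) * ∑ j, x j ^ 2 := by
    rw [Finset.sum_mul]
    apply Finset.sum_le_sum
    intro i _
    exact Finset.sum_mul_sq_le_sq_mul_sq Finset.univ (A i) x
  calc nrm (A.mulVec x) = Real.sqrt (∑ i, (A.mulVec x) i ^ 2) := rfl
    _ ≤ Real.sqrt ((∑ i, ∑ j, A i j ^ 2) * ∑ j, x j ^ 2) := Real.sqrt_le_sqrt key
    _ = frob A * nrm x := Real.sqrt_mul (by positivity) _

lemma specNorm_bound {m n : ℕ} (E : Matrix (Fin m) (Fin n) ℝ) (x : Fin n → ℝ) :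
    nrm (E.mulVec x) ≤ specNorm E * nrm x := by
  have hbdd : BddAbove ((fun x : Fin n → ℝ => Real.sqrt (∑ i, (E.mulVec x) i ^ 2)) ''
      {x : Fin n → ℝ | ∑ i, x i ^ 2 ≤ 1}) := by
    refine ⟨frob E, ?_⟩
    rintro _ ⟨y, hy, rfl⟩
    have h1 : nrm y ≤ 1 := by
      have : nrm y ≤ Real.sqrt 1 := Real.sqrt_le_sqrt hy
      simpa using this
    calc Real.sqrt (∑ i, (E.mulVec y) i ^ 2) = nrm (E.mulVec y) := rfl
      _ ≤ frob E * nrm y := nrm_mulVec_le_frob E y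
      _ ≤ frob E * 1 := by
          exact mul_le_mul_of_nonneg_left h1 (frob_nonneg E)
      _ = frob E := mul_one _
  by_cases h : ∑ i, x i ^ 2 = 0
  · have hx : x = 0 := by
      funext i
      have := (Finset.sum_eq_zero_iff_of_nonneg (fun i _ => sq_nonneg (x i))).mp h i
        (Finset.mem_univ i)
      exact pow_eq_zero_iff (by norm_num) |>.mp this
    subst hx
    simp only [mulVec_zero]
    have : nrm (0 : Fin m → ℝ) = 0 := by simp [nrm]
    rw [this]
    have : nrm (0 : Fin n → ℝ) = 0 := by simp [nrm]
    rw [this, mul_zero]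
  · have ht : 0 < nrm x := by
      have h0 : 0 < ∑ i, x i ^ 2 :=
        lt_of_le_of_ne (Finset.sum_nonneg fun i _ => sq_nonneg _) (Ne.symm h)
      exact Real.sqrt_pos.mpr h0
    set t := nrm x with htdef
    set y := t⁻¹ • x with hydef
    have hy1 : ∑ i, y i ^ 2 = 1 := by
      have : nrm y = 1 := by
        rw [hydef, nrm_smul, abs_of_pos (inv_pos.mpr ht), inv_mul_cancel₀ ht.ne']
      have := congrArg (· ^ 2) this
      simpa [nrm_sq] using this
    have hmem : nrm (E.mulVec y) ∈ _ := Set.mem_image_of_mem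
      (fun x : Fin n → ℝ => Real.sqrt (∑ i, (E.mulVec x) i ^ 2)) (by simp [hy1] : y ∈ {x : Fin n → ℝ | ∑ i, x i ^ 2 ≤ 1})
    have hle : nrm (E.mulVec y) ≤ specNorm E := le_csSup hbdd hmem
    have hEy : E.mulVec y = t⁻¹ • E.mulVec x := by
      rw [hydef, mulVec_smul]
    rw [hEy, nrm_smul, abs_of_pos (inv_pos.mpr ht)] at hle
    calc nrm (E.mulVec x) = t * (t⁻¹ * nrm (E.mulVec x)) := by
          field_simp
      _ ≤ t * specNorm E := mul_le_mul_of_nonneg_left hle ht.le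
      _ = specNorm E * t := mul_comm _ _

lemma nrm_single_one {n : ℕ} (j : Fin n) : nrm (Pi.single j 1 : Fin n → ℝ) = 1 := by
  have : ∑ i, (Pi.single j 1 : Fin n → ℝ) i ^ 2 = 1 := by
    rw [Finset.sum_eq_single j]
    · simp
    · intro i _ hij; simp [Pi.single_eq_of_ne hij]
    · intro h; exact absurd (Finset.mem_univ j) h
  simp [nrm, this]

end AuxP64


open AuxP64 in
/-- Proposition 6.4: the condition `1 − δ̂_K(A) > √K · θ̂_K(A)` is stable under small
spectral-norm perturbations of the matrix. -/
theorem stmt_19 {N m K : ℕ}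
    (I₁ Ip Im : Set (Fin N))
    (hd₁ : Disjoint I₁ Ip) (hd₂ : Disjoint I₁ Im) (hd₃ : Disjoint Ip Im)
    (hun : I₁ ∪ Ip ∪ Im = Set.univ)
    (A₀ : Matrix (Fin m) (Fin N) ℝ) (δ₀ θ₀ : ℝ)
    (hδ₀0 : 0 < δ₀) (hδ₀1 : δ₀ < 1) (hθ₀ : 0 < θ₀)
    (hRI : ∀ x : Fin N → ℝ, {i | x i ≠ 0}.ncard ≤ K →
      (1 - δ₀) * (∑ i, x i ^ 2) ≤ ∑ i, (A₀.mulVec x) i ^ 2)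
    (hRO : ∀ x : Fin N → ℝ, {i | x i ≠ 0}.ncard ≤ K → ∀ j : Fin N,
      (j ∈ I₁ → |A₀.mulVec x ⬝ᵥ (fun k => A₀ k j)| ≤ θ₀ * Real.sqrt (∑ i, x i ^ 2)) ∧
      (j ∈ Ip → max (A₀.mulVec x ⬝ᵥ (fun k => A₀ k j)) 0 ≤ θ₀ * Real.sqrt (∑ i, x i ^ 2)) ∧
      (j ∈ Im → max (-(A₀.mulVec x ⬝ᵥ (fun k => A₀ k j))) 0 ≤ θ₀ * Real.sqrt (∑ i, x i ^ 2)))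
    (hmain : 1 - δ₀ > Real.sqrt K * θ₀) :
    ∃ η > 0, ∀ A : Matrix (Fin m) (Fin N) ℝ, specNorm (A - A₀) < η →
      ∃ δ θ : ℝ, 0 < δ ∧ δ < 1 ∧ 0 < θ ∧
        (∀ x : Fin N → ℝ, {i | x i ≠ 0}.ncard ≤ K →
          (1 - δ) * (∑ i, x i ^ 2) ≤ ∑ i, (A.mulVec x) i ^ 2) ∧
        (∀ x : Fin N → ℝ, {i | x i ≠ 0}.ncard ≤ K → ∀ j : Fin N,
          (j ∈ I₁ → |A.mulVec x ⬝ᵥ (fun k => A k j)| ≤ θ * Real.sqrt (∑ i, x i ^ 2)) ∧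
          (j ∈ Ip → max (A.mulVec x ⬝ᵥ (fun k => A k j)) 0 ≤ θ * Real.sqrt (∑ i, x i ^ 2)) ∧
          (j ∈ Im → max (-(A.mulVec x ⬝ᵥ (fun k => A k j))) 0 ≤ θ * Real.sqrt (∑ i, x i ^ 2))) ∧
        1 - δ > Real.sqrt K * θ := by
  classical
  set M := frob A₀ with hMdef
  have hM0 : 0 ≤ M := frob_nonneg A₀
  set C : ℝ := 2 * M + 1 with hCdef
  have hC0 : 0 < C := by positivity
  set s₀ : ℝ := Real.sqrt (1 - δ₀) with hs₀def
  have h1δ : 0 < 1 - δ₀ := by linarith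
  have hs₀pos : 0 < s₀ := Real.sqrt_pos.mpr h1δ
  have hs₀le1 : s₀ ≤ 1 := Real.sqrt_le_one.mpr (by linarith) |>.trans_eq rfl
  have hs₀sq : s₀ ^ 2 = 1 - δ₀ := Real.sq_sqrt h1δ.le
  have hK0 : (0 : ℝ) ≤ Real.sqrt K := Real.sqrt_nonneg _
  set g : ℝ := 1 - δ₀ - Real.sqrt K * θ₀ with hgdef
  have hg0 : 0 < g := by simp only [hgdef]; linarith
  set η : ℝ := min 1 (min (s₀ / 2) (g / (2 * (2 + Real.sqrt K * C)))) with hηdef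
  have hden : 0 < 2 + Real.sqrt K * C := by positivity
  have hη0 : 0 < η := by
    apply lt_min one_pos
    exact lt_min (by positivity) (div_pos hg0 (by positivity))
  have hη1 : η ≤ 1 := min_le_left _ _
  have hη2 : η ≤ s₀ / 2 := le_trans (min_le_right _ _) (min_le_left _ _)
  have hη3 : η ≤ g / (2 * (2 + Real.sqrt K * C)) :=
    le_trans (min_le_right _ _) (min_le_right _ _)
  refine ⟨η, hη0, ?_⟩
  intro A hA
  set E := A - A₀ with hEdef
  have hAeq : A = A₀ + E := by rw [hEdef]; abel
  -- basic perturbation bounds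
  have hEx : ∀ x : Fin N → ℝ, nrm (E.mulVec x) ≤ η * nrm x := fun x =>
    le_trans (specNorm_bound E x)
      (mul_le_mul_of_nonneg_right hA.le (nrm_nonneg x))
  have hEcol : ∀ j : Fin N, nrm (fun k => E k j) ≤ η := by
    intro j
    have h1 : (fun k => E k j) = E.mulVec (Pi.single j 1) := by
      funext k; simp [Matrix.mulVec_single]
    rw [h1]
    calc nrm (E.mulVec (Pi.single j 1)) ≤ η * nrm (Pi.single j 1 : Fin N → ℝ) := hEx _
      _ = η := by rw [nrm_single_one, mul_one]
  have hA₀x : ∀ x : Fin N → ℝ, nrm (A₀.mulVec x) ≤ M * nrm x := fun x =>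
    nrm_mulVec_le_frob A₀ x
  have hA₀col : ∀ j : Fin N, nrm (fun k => A₀ k j) ≤ M := by
    intro j
    have h1 : (fun k => A₀ k j) = A₀.mulVec (Pi.single j 1) := by
      funext k; simp [Matrix.mulVec_single]
    rw [h1]
    calc nrm (A₀.mulVec (Pi.single j 1)) ≤ M * nrm (Pi.single j 1 : Fin N → ℝ) := hA₀x _
      _ = M := by rw [nrm_single_one, mul_one]
  -- the key dot-product perturbation estimate
  have hkey : ∀ (x : Fin N → ℝ) (j : Fin N),
      |A.mulVec x ⬝ᵥ (fun k => A k j) - A₀.mulVec x ⬝ᵥ (fun k => A₀ k j)| ≤ C * η * nrm x := by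
    intro x j
    have hAx : A.mulVec x = A₀.mulVec x + E.mulVec x := by rw [hAeq, Matrix.add_mulVec]
    have hAc : (fun k => A k j) = (fun k => A₀ k j) + (fun k => E k j) := by
      funext k; rw [hAeq]; simp [Matrix.add_apply]
    have hexp : A.mulVec x ⬝ᵥ (fun k => A k j) - A₀.mulVec x ⬝ᵥ (fun k => A₀ k j)
        = A₀.mulVec x ⬝ᵥ (fun k => E k j) + E.mulVec x ⬝ᵥ (fun k => A₀ k j)
          + E.mulVec x ⬝ᵥ (fun k => E k j) := by
      rw [hAx, hAc, add_dotProduct, dotProduct_add, dotProduct_add]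
      ring
    rw [hexp]
    have b1 : |A₀.mulVec x ⬝ᵥ (fun k => E k j)| ≤ M * nrm x * η := by
      calc |A₀.mulVec x ⬝ᵥ (fun k => E k j)| ≤ nrm (A₀.mulVec x) * nrm (fun k => E k j) :=
            cs _ _
        _ ≤ (M * nrm x) * η := by
            apply mul_le_mul (hA₀x x) (hEcol j) (nrm_nonneg _)
            exact mul_nonneg hM0 (nrm_nonneg _)
    have b2 : |E.mulVec x ⬝ᵥ (fun k => A₀ k j)| ≤ η * nrm x * M := by
      calc |E.mulVec x ⬝ᵥ (fun k => A₀ k j)| ≤ nrm (E.mulVec x) * nrm (fun k => A₀ k j) :=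
            cs _ _
        _ ≤ (η * nrm x) * M := by
            apply mul_le_mul (hEx x) (hA₀col j) (nrm_nonneg _)
            exact mul_nonneg hη0.le (nrm_nonneg _)
    have b3 : |E.mulVec x ⬝ᵥ (fun k => E k j)| ≤ η * nrm x * η := by
      calc |E.mulVec x ⬝ᵥ (fun k => E k j)| ≤ nrm (E.mulVec x) * nrm (fun k => E k j) :=
            cs _ _
        _ ≤ (η * nrm x) * η := by
            apply mul_le_mul (hEx x) (hEcol j) (nrm_nonneg _)
            exact mul_nonneg hη0.le (nrm_nonneg _)
    have htri := abs_add_le (A₀.mulVec x ⬝ᵥ (fun k => E k j) + E.mulVec x ⬝ᵥ (fun k => A₀ k j))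
      (E.mulVec x ⬝ᵥ (fun k => E k j))
    have htri2 := abs_add_le (A₀.mulVec x ⬝ᵥ (fun k => E k j)) (E.mulVec x ⬝ᵥ (fun k => A₀ k j))
    have hnx : 0 ≤ nrm x := nrm_nonneg x
    have hslack : 0 ≤ η * nrm x * (1 - η) :=
      mul_nonneg (mul_nonneg hη0.le hnx) (by linarith)
    have hCexp : C * η * nrm x = M * nrm x * η + η * nrm x * M + η * nrm x * η
        + η * nrm x * (1 - η) := by rw [hCdef]; ring
    linarith
  clear_value M C s₀ g η E
  -- choose the perturbed constants
  refine ⟨1 - (s₀ - η) ^ 2, θ₀ + C * η, ?_, ?_, ?_, ?_, ?_, ?_⟩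
  · -- 0 < δ
    have h1 : s₀ - η < s₀ := by linarith
    have h2 : 0 ≤ s₀ - η := by linarith
    nlinarith
  · -- δ < 1
    have h2 : 0 < s₀ - η := by linarith
    nlinarith
  · -- 0 < θ
    have : 0 ≤ C * η := mul_nonneg hC0.le hη0.le
    linarith
  · -- RIP
    intro x hx
    have hA₀low : s₀ * nrm x ≤ nrm (A₀.mulVec x) := by
      have := hRI x hx
      calc s₀ * nrm x = Real.sqrt ((1 - δ₀) * ∑ i, x i ^ 2) := by
            rw [hs₀def, Real.sqrt_mul h1δ.le]; rfl
        _ ≤ Real.sqrt (∑ i, (A₀.mulVec x) i ^ 2) := Real.sqrt_le_sqrt this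
        _ = nrm (A₀.mulVec x) := rfl
    have htri : nrm (A₀.mulVec x) ≤ nrm (A.mulVec x) + nrm (E.mulVec x) := by
      have h1 : A₀.mulVec x = A.mulVec x + (-1 : ℝ) • E.mulVec x := by
        rw [hAeq, Matrix.add_mulVec]; funext i; simp
      rw [h1]
      calc nrm (A.mulVec x + (-1 : ℝ) • E.mulVec x)
          ≤ nrm (A.mulVec x) + nrm ((-1 : ℝ) • E.mulVec x) := nrm_add_le _ _
        _ = nrm (A.mulVec x) + nrm (E.mulVec x) := by rw [nrm_smul]; norm_num
    have hlow : (s₀ - η) * nrm x ≤ nrm (A.mulVec x) := by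
      have := hEx x
      have hnx : 0 ≤ nrm x := nrm_nonneg x
      nlinarith
    have hlhs : 0 ≤ (s₀ - η) * nrm x := by
      have h2 : 0 ≤ s₀ - η := by linarith
      exact mul_nonneg h2 (nrm_nonneg x)
    have hsq : ((s₀ - η) * nrm x) ^ 2 ≤ nrm (A.mulVec x) ^ 2 := by
      exact pow_le_pow_left₀ hlhs hlow 2
    calc (1 - (1 - (s₀ - η) ^ 2)) * ∑ i, x i ^ 2 = ((s₀ - η) * nrm x) ^ 2 := by
          rw [mul_pow, nrm_sq]; ring
      _ ≤ nrm (A.mulVec x) ^ 2 := hsq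
      _ = ∑ i, (A.mulVec x) i ^ 2 := nrm_sq _
  · -- dot product conditions
    intro x hx j
    obtain ⟨h₁, h₂, h₃⟩ := hRO x hx j
    have hk := hkey x j
    have hnx : Real.sqrt (∑ i, x i ^ 2) = nrm x := rfl
    set a := A.mulVec x ⬝ᵥ (fun k => A k j) with hadef
    set a₀ := A₀.mulVec x ⬝ᵥ (fun k => A₀ k j) with ha₀def
    refine ⟨?_, ?_, ?_⟩
    · intro hj
      have := h₁ hj
      rw [hnx] at this ⊢
      calc |a| ≤ |a₀| + |a - a₀| := by
            have := abs_sub_abs_le_abs_sub a a₀; linarith [abs_sub_abs_le_abs_sub a a₀]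
        _ ≤ θ₀ * nrm x + C * η * nrm x := add_le_add this hk
        _ = (θ₀ + C * η) * nrm x := by ring

    · intro hj
      have h2 := h₂ hj
      rw [hnx] at h2 ⊢
      apply max_le
      · have hd : a - a₀ ≤ C * η * nrm x := (abs_le.mp hk).2
        have h4 : a₀ ≤ max a₀ 0 := le_max_left _ _
        have h5 : (θ₀ + C * η) * nrm x = θ₀ * nrm x + C * η * nrm x := by ring
        linarith
      · have h6 : 0 ≤ nrm x := nrm_nonneg x
        have h7 : (0:ℝ) ≤ θ₀ + C * η := by nlinarith
        exact mul_nonneg h7 h6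
    · intro hj
      have h3 := h₃ hj
      rw [hnx] at h3 ⊢
      apply max_le
      · have hd : a₀ - a ≤ C * η * nrm x := by
          have := (abs_le.mp hk).1; linarith
        have h4 : -a₀ ≤ max (-a₀) 0 := le_max_left _ _
        have h5 : (θ₀ + C * η) * nrm x = θ₀ * nrm x + C * η * nrm x := by ring
        linarith
      · have h6 : 0 ≤ nrm x := nrm_nonneg x
        have h7 : (0:ℝ) ≤ θ₀ + C * η := by nlinarith
        exact mul_nonneg h7 h6
  · -- main inequality
    have hup : (2 + Real.sqrt K * C) * η ≤ g / 2 := by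
      calc (2 + Real.sqrt K * C) * η
          ≤ (2 + Real.sqrt K * C) * (g / (2 * (2 + Real.sqrt K * C))) :=
            mul_le_mul_of_nonneg_left hη3 hden.le
        _ = g / 2 := by field_simp
    have hsq : (s₀ - η) ^ 2 ≥ (1 - δ₀) - 2 * η := by
      nlinarith [hs₀sq, sq_nonneg η, mul_le_mul_of_nonneg_right hs₀le1 hη0.le]
    have hexp : Real.sqrt K * (θ₀ + C * η)
        = Real.sqrt K * θ₀ + Real.sqrt K * C * η := by ring
    rw [hgdef] at hup hg0
    simp only [gt_iff_lt, hexp]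
    nlinarith
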